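/- (Decreasing version of the monotonicity theorem) Let q, α ∈ (0,1), let n0 be an integer, and let y : ℤ → ℝ encode a function on T_q. Suppose y(n0) ≤ 0 and S_y(n) − S_y(n+1) ≤ 0 for every integer n < n0 (i.e. the Riemann q-fractional derivative (_q∇_{qa}^{α} y)(q^n) of order α based at qa, a = q^{n0}, is nonpositive at every point t = q^n with n < n0). Then y is c_q(α)-decreasing, i.e. y(n−1) ≤ c_q(α) · y(n) for every integer n ≤ n0. -/

import Mathlib

noncomputable def qProdTerm (q α r : ℝ) (j : ℕ) : ℝ :=
  (1 - q ^ (r + (j : ℝ))) / (1 - q ^ (r + (j : ℝ) - α))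

noncomputable def qProd (q α r : ℝ) : ℝ := ∏' j : ℕ, qProdTerm q α r j

/-- The q-factorial power `(q^m - q^k)_q^{-α}` for integers `m < k`, defined by the
convergent infinite product
`q^{-mα} · ∏_{j=0}^∞ (1 - q^{k-m+j}) / (1 - q^{k-m+j-α})`. -/
noncomputable def qFac (q α : ℝ) (m k : ℤ) : ℝ :=
  q ^ (-(m : ℝ) * α) *
    ∏' j : ℕ, (1 - q ^ (((k - m : ℤ) : ℝ) + (j : ℝ))) /
      (1 - q ^ (((k - m : ℤ) : ℝ) + (j : ℝ) - α))

/-- `S q α n0 y n = Σ_{i=n}^{n0} q^i (q^n - q^{i+1})_q^{-α} y(i)`; for `n = n0 + 1`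
the range is empty, so `S q α n0 y (n0+1) = 0`.  The Riemann q-fractional derivative
of order `α` based at `qa = q^{n0+1}`, evaluated at `t = q^n`, is
`(S q α n0 y n - S q α n0 y (n+1)) / ((1-q) q^n Γ_q(1-α))`,
whose sign is that of `S q α n0 y n - S q α n0 y (n+1)`. -/
noncomputable def S (q α : ℝ) (n0 : ℤ) (y : ℤ → ℝ) (n : ℤ) : ℝ :=
  ∑ i ∈ Finset.Icc n n0, q ^ (i : ℝ) * qFac q α n (i + 1) * y i

section
variable {q α r : ℝ}


lemma den_pos (hq0 : 0 < q) (hq1 : q < 1) (hα1 : α < 1) (hr : 1 ≤ r) (j : ℕ) :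
    0 < 1 - q ^ (r + (j : ℝ) - α) := by
  have hj : (0:ℝ) ≤ (j : ℝ) := Nat.cast_nonneg j
  have : (0:ℝ) < r + (j : ℝ) - α := by linarith
  exact sub_pos.2 (Real.rpow_lt_one hq0.le hq1 this)

lemma one_le_qProdTerm (hq0 : 0 < q) (hq1 : q < 1) (hα0 : 0 < α) (hα1 : α < 1)
    (hr : 1 ≤ r) (j : ℕ) : 1 ≤ qProdTerm q α r j := by
  rw [qProdTerm, one_le_div (den_pos hq0 hq1 hα1 hr j)]
  have : q ^ (r + (j : ℝ)) ≤ q ^ (r + (j : ℝ) - α) :=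
    Real.rpow_le_rpow_of_exponent_ge hq0 hq1.le (by linarith)
  linarith

lemma qProdTerm_pos (hq0 : 0 < q) (hq1 : q < 1) (hα0 : 0 < α) (hα1 : α < 1)
    (hr : 1 ≤ r) (j : ℕ) : 0 < qProdTerm q α r j :=
  lt_of_lt_of_le one_pos (one_le_qProdTerm hq0 hq1 hα0 hα1 hr j)

lemma multipliable_qProdTerm (hq0 : 0 < q) (hq1 : q < 1) (hα0 : 0 < α) (hα1 : α < 1)
    (hr : 1 ≤ r) : Multipliable (qProdTerm q α r) := by
  have hd0 : 0 < 1 - q ^ (r - α) := by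
    have : (0:ℝ) < r - α := by linarith
    exact sub_pos.2 (Real.rpow_lt_one hq0.le hq1 this)
  set C : ℝ := q ^ (r - α) / (1 - q ^ (r - α)) with hC
  have hlog : Summable fun j : ℕ => Real.log (qProdTerm q α r j) := by
    refine Summable.of_nonneg_of_le
      (fun j => Real.log_nonneg (one_le_qProdTerm hq0 hq1 hα0 hα1 hr j))
      (fun j => ?_) ((summable_geometric_of_lt_one hq0.le hq1).mul_left C)
    have h1 : Real.log (qProdTerm q α r j) ≤ qProdTerm q α r j - 1 :=
      Real.log_le_sub_one_of_pos (qProdTerm_pos hq0 hq1 hα0 hα1 hr j)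
    have hden := den_pos hq0 hq1 hα1 hr j
    have h2 : qProdTerm q α r j - 1
        = (q ^ (r + (j : ℝ) - α) - q ^ (r + (j : ℝ))) / (1 - q ^ (r + (j : ℝ) - α)) := by
      rw [qProdTerm]; field_simp; ring
    have h3 : (q ^ (r + (j : ℝ) - α) - q ^ (r + (j : ℝ))) / (1 - q ^ (r + (j : ℝ) - α))
        ≤ q ^ (r + (j : ℝ) - α) / (1 - q ^ (r - α)) := by
      apply div_le_div₀ (Real.rpow_nonneg hq0.le _)
      · have : (0:ℝ) < q ^ (r + (j : ℝ)) := Real.rpow_pos_of_pos hq0 _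
        linarith
      · exact hd0
      · have : q ^ (r + (j : ℝ) - α) ≤ q ^ (r - α) :=
          Real.rpow_le_rpow_of_exponent_ge hq0 hq1.le
            (by have := Nat.cast_nonneg (α := ℝ) j; linarith)
        linarith
    have h4 : q ^ (r + (j : ℝ) - α) / (1 - q ^ (r - α)) = C * q ^ j := by
      have : q ^ (r + (j : ℝ) - α) = q ^ (r - α) * q ^ j := by
        rw [← Real.rpow_natCast q j, ← Real.rpow_add hq0]; ring_nf
      rw [this, hC]; ring
    calc Real.log (qProdTerm q α r j) ≤ qProdTerm q α r j - 1 := h1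
      _ = _ := h2
      _ ≤ _ := h3
      _ = C * q ^ j := h4
  have := Real.multipliable_of_summable_log
    (fun j => qProdTerm_pos hq0 hq1 hα0 hα1 hr j) hlog
  exact this

lemma one_le_qProd (hq0 : 0 < q) (hq1 : q < 1) (hα0 : 0 < α) (hα1 : α < 1)
    (hr : 1 ≤ r) : 1 ≤ qProd q α r := by
  rw [qProd]
  have key : ∀ s : Finset ℕ, (1:ℝ) ≤ ∏ i ∈ s, qProdTerm q α r i := fun s =>
    calc (1:ℝ) = ∏ _i ∈ s, 1 := by simp
      _ ≤ ∏ i ∈ s, qProdTerm q α r i :=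
        Finset.prod_le_prod (fun _ _ => zero_le_one)
          (fun i _ => one_le_qProdTerm hq0 hq1 hα0 hα1 hr i)
  exact ge_of_tendsto' (multipliable_qProdTerm hq0 hq1 hα0 hα1 hr).hasProd key

lemma qProd_pos (hq0 : 0 < q) (hq1 : q < 1) (hα0 : 0 < α) (hα1 : α < 1)
    (hr : 1 ≤ r) : 0 < qProd q α r :=
  lt_of_lt_of_le one_pos (one_le_qProd hq0 hq1 hα0 hα1 hr)

lemma qProd_shift (hq0 : 0 < q) (hq1 : q < 1) (hα0 : 0 < α) (hα1 : α < 1)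
    (hr : 1 ≤ r) : qProd q α r = qProdTerm q α r 0 * qProd q α (r + 1) := by
  have hsh : ∀ j : ℕ, qProdTerm q α r (j + 1) = qProdTerm q α (r + 1) j := fun j => by
    have e : r + ((j + 1 : ℕ) : ℝ) = (r + 1) + (j : ℝ) := by push_cast; ring
    rw [qProdTerm, qProdTerm, e]
  have hm : Multipliable fun n : ℕ => qProdTerm q α r (n + 1) :=
    (multipliable_qProdTerm hq0 hq1 hα0 hα1 (by linarith : (1:ℝ) ≤ r + 1)).congr
      (fun j => (hsh j).symm)
  rw [qProd, tprod_eq_zero_mul' hm, qProd]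
  congr 1
  exact tprod_congr hsh

lemma qFac_eq (q α : ℝ) (m k : ℤ) :
    qFac q α m k = q ^ (-(m : ℝ) * α) * qProd q α ((k - m : ℤ) : ℝ) := rfl

lemma qFac_le (hq0 : 0 < q) (hq1 : q < 1) (hα0 : 0 < α) (hα1 : α < 1)
    {n i : ℤ} (hi : n + 1 ≤ i) : qFac q α n (i + 1) ≤ qFac q α (n + 1) (i + 1) := by
  rw [qFac_eq, qFac_eq]
  have hr' : (1 : ℝ) ≤ ((i - n : ℤ) : ℝ) := by exact_mod_cast (by omega : (1:ℤ) ≤ i - n)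
  have e1 : ((i + 1 - n : ℤ) : ℝ) = ((i - n : ℤ) : ℝ) + 1 := by push_cast; ring
  have e2 : ((i + 1 - (n + 1) : ℤ) : ℝ) = ((i - n : ℤ) : ℝ) := by push_cast; ring
  rw [e1, e2]
  set r' := ((i - n : ℤ) : ℝ)
  have hPpos : 0 < qProd q α (r' + 1) := qProd_pos hq0 hq1 hα0 hα1 (by linarith)
  have hP : qProd q α (r' + 1) ≤ qProd q α r' := by
    rw [qProd_shift hq0 hq1 hα0 hα1 hr']
    nlinarith [one_le_qProdTerm hq0 hq1 hα0 hα1 hr' 0]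
  have hA : q ^ (-(n : ℝ) * α) ≤ q ^ (-((n + 1 : ℤ) : ℝ) * α) := by
    apply Real.rpow_le_rpow_of_exponent_ge hq0 hq1.le
    push_cast; nlinarith
  have hA0 : 0 < q ^ (-((n + 1 : ℤ) : ℝ) * α) := Real.rpow_pos_of_pos hq0 _
  exact mul_le_mul hA hP hPpos.le hA0.le

lemma step (hq0 : 0 < q) (hq1 : q < 1) (hα0 : 0 < α) (hα1 : α < 1)
    (n0 : ℤ) (y : ℤ → ℝ) (n : ℤ) (hn : n < n0)
    (hyneg : ∀ i : ℤ, n + 1 ≤ i → i ≤ n0 → y i ≤ 0)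
    (hSD : S q α n0 y n - S q α n0 y (n + 1) ≤ 0) :
    y n ≤ q ^ (1 - α) * (1 - q ^ α) / (1 - q) * y (n + 1) := by
  have hq' : (0:ℝ) < 1 - q := by linarith
  set u := q ^ (n : ℝ) with hu
  set A := q ^ (-(n : ℝ) * α) with hAdef
  set P1 := qProd q α 1 with hP1def
  set P2 := qProd q α 2 with hP2def
  set V := q ^ (1 - α) with hVdef
  set B := q ^ (α : ℝ) with hBdef
  set E := q ^ (-α : ℝ) with hEdef
  have hu0 : 0 < u := Real.rpow_pos_of_pos hq0 _
  have hA0 : 0 < A := Real.rpow_pos_of_pos hq0 _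
  have hP1 : 0 < P1 := qProd_pos hq0 hq1 hα0 hα1 le_rfl
  have hVB : V * B = q := by
    rw [hVdef, hBdef, ← Real.rpow_add hq0]; norm_num
  have hEq : E * q = V := by
    rw [hEdef, hVdef]; nth_rewrite 2 [← Real.rpow_one q]
    rw [← Real.rpow_add hq0]; ring_nf
  have hB1 : B < 1 := Real.rpow_lt_one hq0.le hq1 hα0
  have hV1 : V < 1 := Real.rpow_lt_one hq0.le hq1 (by linarith)
  have hV0 : 0 < V := Real.rpow_pos_of_pos hq0 _
  -- P1 in terms of P2
  have hP2' : P2 * (1 - q) = P1 * (1 - V) := by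
    have h := qProd_shift hq0 hq1 hα0 hα1 (le_rfl : (1:ℝ) ≤ 1)
    have ht : qProdTerm q α 1 0 = (1 - q) / (1 - V) := by
      rw [qProdTerm, hVdef]
      norm_num
    rw [ht] at h
    have : (1:ℝ) + 1 = 2 := by norm_num
    rw [this] at h
    rw [← hP1def, ← hP2def] at h
    have hV' : (0:ℝ) < 1 - V := by linarith
    field_simp at h
    linarith [h]
  -- qFac values
  have hrfl : ∀ m k : ℤ, qFac q α m k = q ^ (-(m : ℝ) * α) * qProd q α ((k - m : ℤ) : ℝ) :=
    qFac_eq q α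
  have hf1 : qFac q α n (n + 1) = A * P1 := by
    rw [hrfl]; congr 2; · push_cast; ring
  have hf2 : qFac q α n (n + 1 + 1) = A * P2 := by
    rw [hrfl]; congr 2; · push_cast; ring
  have hf3 : qFac q α (n + 1) (n + 1 + 1) = A * E * P1 := by
    rw [hrfl]
    have e1 : -((n + 1 : ℤ) : ℝ) * α = -(n : ℝ) * α + (-α) := by push_cast; ring
    have e2 : ((n + 1 + 1 - (n + 1) : ℤ) : ℝ) = 1 := by push_cast; ring
    rw [e1, e2, Real.rpow_add hq0, ← hAdef, ← hEdef, ← hP1def]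
  -- decompose the sum
  have hset : Finset.Icc n n0 = insert n (Finset.Icc (n + 1) n0) := by
    ext m; simp only [Finset.mem_Icc, Finset.mem_insert]; omega
  have hnotmem : n ∉ Finset.Icc (n + 1) n0 := by simp
  have hdiff : S q α n0 y n - S q α n0 y (n + 1)
      = q ^ (n : ℝ) * qFac q α n (n + 1) * y n
        + ∑ i ∈ Finset.Icc (n + 1) n0,
            (q ^ (i : ℝ) * qFac q α n (i + 1) - q ^ (i : ℝ) * qFac q α (n + 1) (i + 1)) * y i := by
    rw [S, S, hset, Finset.sum_insert hnotmem, add_sub_assoc, ← Finset.sum_sub_distrib]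
    congr 1
    exact Finset.sum_congr rfl fun i _ => by ring
  have hterm : ∀ i ∈ Finset.Icc (n + 1) n0,
      0 ≤ (q ^ (i : ℝ) * qFac q α n (i + 1) - q ^ (i : ℝ) * qFac q α (n + 1) (i + 1)) * y i := by
    intro i hi; rw [Finset.mem_Icc] at hi
    have h1 := qFac_le hq0 hq1 hα0 hα1 hi.1
    have h2 : (0:ℝ) < q ^ (i : ℝ) := Real.rpow_pos_of_pos hq0 _
    have h3 := hyneg i hi.1 hi.2
    nlinarith [mul_nonneg (mul_nonneg h2.le (sub_nonneg.2 h1)) (neg_nonneg.2 h3)]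
  have hmem : n + 1 ∈ Finset.Icc (n + 1) n0 := by
    rw [Finset.mem_Icc]; omega
  have hsum_ge := Finset.single_le_sum hterm hmem
  have hq1eq : q ^ ((n + 1 : ℤ) : ℝ) = u * q := by
    have : ((n + 1 : ℤ) : ℝ) = (n : ℝ) + 1 := by push_cast; ring
    rw [this, Real.rpow_add hq0, Real.rpow_one, hu]
  have hkey : u * (A * P1) * y n
      + (u * q * (A * P2) - u * q * (A * E * P1)) * y (n + 1) ≤ 0 := by
    have := hSD
    rw [hdiff] at this
    have h2 := hsum_ge
    rw [hq1eq, hf2, hf3] at h2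
    rw [hf1] at this
    rw [← hu] at this
    linarith
  -- final algebra
  have hgoal2 : y n * (1 - q) ≤ V * (1 - B) * y (n + 1) := by
    have hpos : 0 < u * A * P1 := by positivity
    rw [← mul_le_mul_iff_right₀ hpos]
    have hco : u * A * P1 * (V * (1 - B) * y (n + 1))
        = (u * q * (A * E * P1) - u * q * (A * P2)) * y (n + 1) * (1 - q) := by
      linear_combination (-(u * A * P1 * y (n + 1) * (1 - q))) * hEq
        + (u * q * A * y (n + 1)) * hP2' + (-(u * A * P1 * y (n + 1))) * hVB
    rw [hco]
    have h3 : u * (A * P1) * y n ≤ (u * q * (A * E * P1) - u * q * (A * P2)) * y (n + 1) := by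
      linarith
    calc u * A * P1 * (y n * (1 - q))
        = (u * (A * P1) * y n) * (1 - q) := by ring
      _ ≤ ((u * q * (A * E * P1) - u * q * (A * P2)) * y (n + 1)) * (1 - q) :=
          mul_le_mul_of_nonneg_right h3 hq'.le
  rw [div_mul_eq_mul_div, le_div_iff₀ hq']
  linarith [hgoal2]
end


/-- Decreasing version of the monotonicity theorem: if `y(a) ≤ 0`
(with `a = q^{n0}`) and the Riemann q-fractional derivative of order `α ∈ (0,1)`
based at `qa` is nonpositive at every `t = q^n`, `n < n0`, then `y` is
`c_q(α)`-decreasing, where `c_q(α) = q^{1-α}(1-q^α)/(1-q)`. -/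
theorem qFrac_antitone (q α : ℝ) (hq0 : 0 < q) (hq1 : q < 1)
    (hα0 : 0 < α) (hα1 : α < 1) (n0 : ℤ) (y : ℤ → ℝ)
    (hy : y n0 ≤ 0)
    (hD : ∀ n : ℤ, n < n0 → S q α n0 y n - S q α n0 y (n + 1) ≤ 0) :
    ∀ n : ℤ, n ≤ n0 → y (n - 1) ≤ q ^ (1 - α) * (1 - q ^ α) / (1 - q) * y n := by
  have hq' : (0:ℝ) < 1 - q := by linarith
  have hB1 : q ^ α < 1 := Real.rpow_lt_one hq0.le hq1 hα0
  have hV0 : (0:ℝ) < q ^ (1 - α) := Real.rpow_pos_of_pos hq0 _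
  have hc : 0 ≤ q ^ (1 - α) * (1 - q ^ α) / (1 - q) :=
    div_nonneg (mul_nonneg hV0.le (by linarith)) hq'.le
  have key : ∀ k : ℕ, ∀ i : ℤ, n0 - (k : ℤ) ≤ i → i ≤ n0 → y i ≤ 0 := by
    intro k
    induction k with
    | zero =>
      intro i h1 h2
      have : i = n0 := by omega
      rwa [this]
    | succ k ih =>
      intro i h1 h2
      by_cases hik : n0 - (k : ℤ) ≤ i
      · exact ih i hik h2
      · have hi' : i < n0 := by omega
        have hstep := step hq0 hq1 hα0 hα1 n0 y i hi'
          (fun j hj1 hj2 => ih j (by push_cast at h1 ⊢; omega) hj2) (hD i hi')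
        have hy1 : y (i + 1) ≤ 0 := ih (i + 1) (by push_cast at h1 ⊢; omega) (by omega)
        nlinarith
  intro n hn
  have h1 : n - 1 < n0 := by omega
  have hstep := step hq0 hq1 hα0 hα1 n0 y (n - 1) h1
    (fun j hj1 hj2 => key (n0 - j).toNat j (by omega) hj2) (hD (n - 1) h1)
  have : n - 1 + 1 = n := by omega
  rwa [this] at hstep
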